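/- arXiv:2012.06794 — 2 statements merged into one kernel-verified Lean document; each statement's English description precedes it below -/
import Mathlib

section
/- For every cardinal κ ≥ 1, the space 𝔾𝕊_κ' (the κ-fold Griffiths space with all cone tips removed) strongly deformation retracts onto 𝔼_κ: there is a continuous map H : 𝔾𝕊_κ' × [0,1] → 𝔾𝕊_κ' with H(x,0) = x for all x, H(x,1) ∈ 𝔼_κ for all x, and H(e,s) = e for all e ∈ 𝔼_κ and all s ∈ [0,1]. -/
noncomputable section

open Set

namespace Griffiths

/-- The one-fold Griffiths cone over the Hawaiian earring, as a subset of Euclidean 3-space: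
the union over heights `r ∈ [0,1]` and `n ∈ ℕ` of the circle at height `r` with center
`(0, (1-r)/(n+3))` and radius `(1-r)/(n+3)` (the geodesic cone over the Hawaiian earring
`𝔼 × {0}` with cone tip `(0,0,1)`). -/
def GS1set : Set (EuclideanSpace ℝ (Fin 3)) :=
  ⋃ r ∈ Set.Icc (0 : ℝ) 1, ⋃ n : ℕ,
    {x | x 0 ^ 2 + (x 1 - (1 - r) / (n + 3)) ^ 2 = ((1 - r) / (n + 3)) ^ 2 ∧ x 2 = r}

lemma zero_mem_GS1set : (0 : EuclideanSpace ℝ (Fin 3)) ∈ GS1set := by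
  have h0 : (0:ℝ) ∈ Set.Icc (0:ℝ) 1 := by norm_num
  refine Set.mem_biUnion h0 (Set.mem_iUnion.2 ⟨0, ?_, ?_⟩) <;> simp

/-- The relation identifying the copies of the origin `(0,0,0)` in the disjoint union of
`ι`-many copies of `𝔾𝕊₁`. -/
def wedgeSetoid (ι : Type) : Setoid (Σ _ : ι, GS1set) where
  r x y := x = y ∨ (x.2.val = 0 ∧ y.2.val = 0)
  iseqv := by
    constructor
    · intro x; exact Or.inl rfl
    · rintro x y (rfl | h); exacts [Or.inl rfl, Or.inr ⟨h.2, h.1⟩]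
    · rintro x y z (rfl | h) (rfl | h')
      · exact Or.inl rfl
      · exact Or.inr h'
      · exact Or.inr h
      · exact Or.inr ⟨h.1, h'.2⟩

/-- The `ι`-fold Griffiths space: the wedge of `ι`-many copies of `𝔾𝕊₁` at the point
`(0,0,0)`. -/
def GS (ι : Type) : Type := Quotient (wedgeSetoid ι)

/-- The wedge metric on representatives. -/
def preDist {ι : Type} (x y : Σ _ : ι, GS1set) : ℝ :=
  @ite _ (x.1 = y.1) (Classical.dec _)
    (dist (x.2.val) (y.2.val))
    (dist (x.2.val) 0 + dist (0 : EuclideanSpace ℝ (Fin 3)) (y.2.val))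

lemma preDist_wd {ι : Type} (x y x' y' : Σ _ : ι, GS1set)
    (hx : (wedgeSetoid ι).r x x') (hy : (wedgeSetoid ι).r y y') :
    preDist x y = preDist x' y' := by
  classical
  have key : ∀ a b c : Σ _ : ι, GS1set, a.2.val = 0 → b.2.val = 0 →
      preDist a c = preDist b c := by
    intro a b c ha hb
    unfold preDist
    by_cases h1 : a.1 = c.1 <;> by_cases h2 : b.1 = c.1 <;>
      simp [h1, h2, ha, hb, dist_comm]
  have symmkey : ∀ a c d : Σ _ : ι, GS1set, c.2.val = 0 → d.2.val = 0 →
      preDist a c = preDist a d := by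
    intro a c d hc hd
    unfold preDist
    by_cases h1 : a.1 = c.1 <;> by_cases h2 : a.1 = d.1 <;>
      simp [h1, h2, hc, hd]
  rcases hx with rfl | hx
  · rcases hy with rfl | hy
    · rfl
    · exact symmkey _ _ _ hy.1 hy.2
  · rcases hy with rfl | hy
    · exact key _ _ _ hx.1 hx.2
    · rw [key _ x' _ hx.1 hx.2, symmkey _ _ _ hy.1 hy.2]

instance GSMetric (ι : Type) : MetricSpace (GS ι) where
  dist := Quotient.lift₂ preDist fun a₁ b₁ a₂ b₂ h₁ h₂ => preDist_wd a₁ b₁ a₂ b₂ h₁ h₂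
  dist_self := by
    rintro ⟨x⟩
    show preDist x x = 0
    simp [preDist]
  dist_comm := by
    rintro ⟨x⟩ ⟨y⟩
    show preDist x y = preDist y x
    unfold preDist
    by_cases h : x.1 = y.1
    · rw [if_pos h, if_pos h.symm, dist_comm]
    · have h' : ¬ y.1 = x.1 := fun hh => h hh.symm
      rw [if_neg h, if_neg h', dist_comm (x.2.val) (0 : EuclideanSpace ℝ (Fin 3)),
        dist_comm ((0 : EuclideanSpace ℝ (Fin 3))) (y.2.val)]
      ring
  dist_triangle := by
    rintro ⟨x⟩ ⟨y⟩ ⟨z⟩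
    show preDist x z ≤ preDist x y + preDist y z
    unfold preDist
    have t3 := dist_triangle (x.2.val) (y.2.val) (z.2.val)
    have txy0 := dist_triangle (x.2.val) (y.2.val) (0 : EuclideanSpace ℝ (Fin 3))
    have t0yz := dist_triangle (0 : EuclideanSpace ℝ (Fin 3)) (y.2.val) (z.2.val)
    have tx0z := dist_triangle (x.2.val) (0 : EuclideanSpace ℝ (Fin 3)) (z.2.val)
    have h0y : (0:ℝ) ≤ dist (0 : EuclideanSpace ℝ (Fin 3)) (y.2.val) := dist_nonneg
    have hy0 : (0:ℝ) ≤ dist (y.2.val) (0 : EuclideanSpace ℝ (Fin 3)) := dist_nonneg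
    have hcy : dist (y.2.val) (0 : EuclideanSpace ℝ (Fin 3))
        = dist (0 : EuclideanSpace ℝ (Fin 3)) (y.2.val) := dist_comm _ _
    split_ifs with h1 h2 h3 h3' h2' h3'' h3'''
    all_goals
      first
        | exact absurd (‹x.1 = y.1›.trans ‹y.1 = z.1›) ‹¬ x.1 = z.1›
        | exact absurd (‹x.1 = y.1›.symm.trans ‹x.1 = z.1›) ‹¬ y.1 = z.1›
        | exact absurd (‹x.1 = z.1›.trans ‹y.1 = z.1›.symm) ‹¬ x.1 = y.1›
        | linarith
  eq_of_dist_eq_zero := by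
    rintro ⟨x⟩ ⟨y⟩ h
    replace h : preDist x y = 0 := h
    unfold preDist at h
    apply Quotient.sound
    by_cases hxy : x.1 = y.1
    · rw [if_pos hxy] at h
      left
      obtain ⟨a, xv⟩ := x
      obtain ⟨b, yv⟩ := y
      cases hxy
      have : xv = yv := Subtype.ext (by simpa using dist_eq_zero.mp h)
      rw [this]
    · rw [if_neg hxy] at h
      right
      have hx0 : (0:ℝ) ≤ dist (x.2.val) (0 : EuclideanSpace ℝ (Fin 3)) := dist_nonneg
      have h0y : (0:ℝ) ≤ dist (0 : EuclideanSpace ℝ (Fin 3)) (y.2.val) := dist_nonneg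
      have h1 : dist (x.2.val) (0 : EuclideanSpace ℝ (Fin 3)) = 0 := by linarith
      have h2 : dist (0 : EuclideanSpace ℝ (Fin 3)) (y.2.val) = 0 := by linarith
      exact ⟨dist_eq_zero.mp h1, (dist_eq_zero.mp h2).symm⟩

/-- The wedge point `∘` of the `ι`-fold Griffiths space. -/
def basept {ι : Type} (a : ι) : GS ι := ⟦⟨a, ⟨0, zero_mem_GS1set⟩⟩⟧

lemma basept_eq {ι : Type} (a b : ι) : basept a = basept b :=
  Quotient.sound (Or.inr ⟨rfl, rfl⟩)

end Griffiths

namespace Griffiths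

/-- The cone tip `(0,0,1)` of `𝔾𝕊₁`. -/
def coneTip : EuclideanSpace ℝ (Fin 3) := WithLp.toLp 2 (fun i => if i = 2 then 1 else 0)

lemma coneTip_mem_GS1set : coneTip ∈ GS1set := by
  have h1 : (1:ℝ) ∈ Set.Icc (0:ℝ) 1 := by norm_num
  refine Set.mem_biUnion h1 (Set.mem_iUnion.2 ⟨0, ?_, ?_⟩) <;> simp [coneTip]

/-- The set of cone tips of the `ι`-fold Griffiths space. -/
def coneTips (ι : Type) : Set (GS ι) :=
  {p | ∃ α : ι, p = ⟦⟨α, ⟨coneTip, coneTip_mem_GS1set⟩⟩⟧}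

/-- The wedge `𝔼_κ` of the copies of the Hawaiian earring inside the `ι`-fold Griffiths
space: the points of height `0`. -/
def earringWedge (ι : Type) : Set (GS ι) :=
  {p | ∃ a : Σ _ : ι, GS1set, ⟦a⟧ = p ∧ a.2.val 2 = 0}


/-! ### Auxiliary material for the deformation retraction -/

lemma mem_GS1set_iff {x : EuclideanSpace ℝ (Fin 3)} :
    x ∈ GS1set ↔ ∃ r, r ∈ Set.Icc (0:ℝ) 1 ∧ ∃ n : ℕ,
      x 0 ^ 2 + (x 1 - (1 - r) / (n + 3)) ^ 2 = ((1 - r) / (n + 3)) ^ 2 ∧ x 2 = r := by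
  simp only [GS1set, Set.mem_iUnion, Set.mem_setOf_eq, Set.mem_Icc]
  tauto

lemma height_mem {x : EuclideanSpace ℝ (Fin 3)} (hx : x ∈ GS1set) :
    x 2 ∈ Set.Icc (0:ℝ) 1 := by
  obtain ⟨r, hr, n, _, hx2⟩ := mem_GS1set_iff.1 hx
  rw [hx2]; exact hr

lemma coneTip_apply2 : coneTip 2 = 1 := by simp [coneTip]

lemma coneTip_ne_zero : coneTip ≠ (0 : EuclideanSpace ℝ (Fin 3)) := by
  intro h
  have := congrArg (fun v : EuclideanSpace ℝ (Fin 3) => v 2) h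
  simp [coneTip] at this

lemma eq_coneTip_of_height {x : EuclideanSpace ℝ (Fin 3)} (hx : x ∈ GS1set)
    (h2 : x 2 = 1) : x = coneTip := by
  obtain ⟨r, hr, n, hcirc, hx2⟩ := mem_GS1set_iff.1 hx
  have hr1 : r = 1 := by rw [← hx2, h2]
  subst hr1
  have hn : ((n:ℝ) + 3) ≠ 0 := by positivity
  rw [show (1:ℝ) - 1 = 0 by ring, zero_div] at hcirc
  have h0 : x 0 = 0 := by nlinarith [sq_nonneg (x 0), sq_nonneg (x 1 - 0)]
  have h1 : x 1 = 0 := by nlinarith [sq_nonneg (x 0), sq_nonneg (x 1 - 0)]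
  ext i
  fin_cases i <;> simp [coneTip, h0, h1, h2]

/-- The scaling factor of the deformation. -/
def lam (r s : ℝ) : ℝ := (1 - (1 - s) * r) / (1 - r)

/-- The deformation on the ambient Euclidean space: slide a point of height `r`
down the cone to height `(1-s)·r`. -/
def fmap (x : EuclideanSpace ℝ (Fin 3)) (s : ℝ) : EuclideanSpace ℝ (Fin 3) :=
  WithLp.toLp 2 (fun i => if i = 2 then (1 - s) * x 2 else lam (x 2) s * x i)

lemma fmap_apply0 (x : EuclideanSpace ℝ (Fin 3)) (s : ℝ) :
    fmap x s 0 = lam (x 2) s * x 0 := by simp [fmap]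

lemma fmap_apply1 (x : EuclideanSpace ℝ (Fin 3)) (s : ℝ) :
    fmap x s 1 = lam (x 2) s * x 1 := by simp [fmap]

lemma fmap_apply2 (x : EuclideanSpace ℝ (Fin 3)) (s : ℝ) :
    fmap x s 2 = (1 - s) * x 2 := by simp [fmap]

lemma fmap_mem {x : EuclideanSpace ℝ (Fin 3)} {s : ℝ} (hx : x ∈ GS1set)
    (hs : s ∈ Set.Icc (0:ℝ) 1) : fmap x s ∈ GS1set := by
  obtain ⟨r, hr, n, hcirc, hx2⟩ := mem_GS1set_iff.1 hx
  have hn : ((n:ℝ) + 3) ≠ 0 := by positivity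
  refine mem_GS1set_iff.2 ⟨(1 - s) * r, ⟨mul_nonneg (by linarith [hs.2]) hr.1, ?_⟩, n, ?_, ?_⟩
  · nlinarith [hr.1, hr.2, hs.1, hs.2]
  · rw [fmap_apply0, fmap_apply1, hx2]
    by_cases hr1 : r = 1
    · subst hr1
      rw [show (1:ℝ) - 1 = 0 by ring, zero_div] at hcirc
      have h0 : x 0 = 0 := by nlinarith [sq_nonneg (x 0), sq_nonneg (x 1 - 0)]
      have h1 : x 1 = 0 := by nlinarith [sq_nonneg (x 0), sq_nonneg (x 1 - 0)]
      rw [h0, h1]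
      ring
    · have h1r : (1:ℝ) - r ≠ 0 := sub_ne_zero.2 (fun h => hr1 h.symm)
      have hlc : lam r s * ((1 - r) / (n + 3)) = (1 - (1 - s) * r) / (n + 3) := by
        unfold lam
        field_simp
      rw [← hlc]
      linear_combination (lam r s) ^ 2 * hcirc
  · rw [fmap_apply2, hx2]

lemma fmap_of_height_zero {x : EuclideanSpace ℝ (Fin 3)} (h : x 2 = 0) (s : ℝ) :
    fmap x s = x := by
  ext i
  fin_cases i <;> simp [fmap, lam, h]

lemma fmap_zero (s : ℝ) : fmap (0 : EuclideanSpace ℝ (Fin 3)) s = 0 :=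
  fmap_of_height_zero rfl s

lemma fmap_s_zero {x : EuclideanSpace ℝ (Fin 3)} (h : x 2 ≠ 1) : fmap x 0 = x := by
  have h1r : (1:ℝ) - x 2 ≠ 0 := sub_ne_zero.2 (fun hh => h hh.symm)
  have hl : lam (x 2) 0 = 1 := by
    unfold lam
    rw [show (1:ℝ) - (1 - 0) * x 2 = 1 - x 2 by ring, div_self h1r]
  ext i
  fin_cases i <;> simp [fmap, hl]

lemma coord_le_norm (x : EuclideanSpace ℝ (Fin 3)) (i : Fin 3) : |x i| ≤ ‖x‖ := by
  rw [EuclideanSpace.norm_eq, ← Real.sqrt_sq_eq_abs]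
  apply Real.sqrt_le_sqrt
  have : (x i) ^ 2 = ‖x i‖ ^ 2 := by rw [Real.norm_eq_abs, sq_abs]
  rw [this]
  exact Finset.single_le_sum (f := fun j => ‖x j‖ ^ 2) (fun j _ => by positivity)
    (Finset.mem_univ i)

lemma norm_fmap_le {x : EuclideanSpace ℝ (Fin 3)} {s : ℝ} (hx : x ∈ GS1set)
    (hs : s ∈ Set.Icc (0:ℝ) 1) (hsm : ‖x‖ ≤ 1/2) : ‖fmap x s‖ ≤ 2 * ‖x‖ := by
  have h2 := height_mem hx
  have hx2 : x 2 ≤ 1/2 := le_trans (le_trans (le_abs_self _) (coord_le_norm x 2)) hsm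
  have h1r : (0:ℝ) < 1 - x 2 := by linarith
  have hl0 : 0 ≤ lam (x 2) s := by
    apply div_nonneg _ (le_of_lt h1r)
    nlinarith [hs.1, hs.2, h2.1, h2.2]
  have hl2 : lam (x 2) s ≤ 2 := by
    rw [lam, div_le_iff₀ h1r]
    have hsx : s * x 2 ≤ x 2 := by nlinarith [hs.2, h2.1]
    linarith
  rw [EuclideanSpace.norm_eq, EuclideanSpace.norm_eq,
    show (2:ℝ) * Real.sqrt (∑ i, ‖x i‖ ^ 2) = Real.sqrt (2^2 * ∑ i, ‖x i‖ ^ 2) by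
      rw [Real.sqrt_mul (by positivity), Real.sqrt_sq (by norm_num)]]
  apply Real.sqrt_le_sqrt
  simp only [Real.norm_eq_abs, sq_abs, Fin.sum_univ_three]
  rw [fmap_apply0, fmap_apply1, fmap_apply2]
  have hb0 : (lam (x 2) s * x 0) ^ 2 ≤ 4 * (x 0) ^ 2 := by
    nlinarith [mul_nonneg (mul_nonneg (sub_nonneg.2 hl2)
      (by linarith : (0:ℝ) ≤ 2 + lam (x 2) s)) (sq_nonneg (x 0))]
  have hb1 : (lam (x 2) s * x 1) ^ 2 ≤ 4 * (x 1) ^ 2 := by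
    nlinarith [mul_nonneg (mul_nonneg (sub_nonneg.2 hl2)
      (by linarith : (0:ℝ) ≤ 2 + lam (x 2) s)) (sq_nonneg (x 1))]
  have hb2 : ((1 - s) * x 2) ^ 2 ≤ 4 * (x 2) ^ 2 := by
    nlinarith [mul_nonneg (mul_nonneg hs.1 (by linarith [hs.2] : (0:ℝ) ≤ 2 - s))
      (sq_nonneg (x 2)), sq_nonneg (x 2)]
  linarith

/-! ### Metric lemmas on the wedge -/

lemma dist_mk_mk {ι : Type} (a b : Σ _ : ι, GS1set) :
    dist (α := GS ι) ⟦a⟧ ⟦b⟧ = preDist a b := rfl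

lemma dist_mk_same {ι : Type} (α : ι) (u v : GS1set) :
    dist (α := GS ι) ⟦⟨α, u⟩⟧ ⟦⟨α, v⟩⟧ = dist u.val v.val := by
  rw [dist_mk_mk]; simp [preDist]

lemma dist_mk_ne {ι : Type} {α β : ι} (h : β ≠ α) (u v : GS1set) :
    dist (α := GS ι) ⟦⟨β, u⟩⟧ ⟦⟨α, v⟩⟧ = dist u.val 0 + dist 0 v.val := by
  rw [dist_mk_mk]; simp [preDist, h]

lemma mk_mem_coneTips_iff {ι : Type} {α : ι} {u : GS1set} :
    (⟦⟨α, u⟩⟧ : GS ι) ∈ coneTips ι ↔ u.val = coneTip := by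
  constructor
  · rintro ⟨β, hβ⟩
    rcases Quotient.exact hβ with h | h
    · obtain ⟨h1, h2⟩ := Sigma.mk.inj_iff.1 h
      exact congrArg Subtype.val (eq_of_heq h2)
    · exact absurd h.2.symm coneTip_ne_zero.symm
  · intro h
    exact ⟨α, by rw [show u = ⟨coneTip, coneTip_mem_GS1set⟩ from Subtype.ext h]⟩

lemma mk_mem_earringWedge_iff {ι : Type} {α : ι} {u : GS1set} :
    (⟦⟨α, u⟩⟧ : GS ι) ∈ earringWedge ι ↔ u.val 2 = 0 := by
  constructor
  · rintro ⟨b, hb, h2⟩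
    rcases Quotient.exact hb with h | h
    · rw [h] at h2; exact h2
    · rw [h.2]; rfl
  · intro h
    exact ⟨⟨α, u⟩, rfl, h⟩

/-! ### The deformation on the wedge -/

/-- The deformation at time `s`, as a self-map of the `ι`-fold Griffiths space. -/
def fmapGS {ι : Type} (s : ℝ) (hs : s ∈ Set.Icc (0:ℝ) 1) : GS ι → GS ι :=
  Quotient.lift
    (fun a : Σ _ : ι, GS1set =>
      (⟦⟨a.1, ⟨fmap a.2.val s, fmap_mem a.2.2 hs⟩⟩⟧ : GS ι))
    (by
      rintro a b (rfl | h)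
      · rfl
      · refine Quotient.sound (Or.inr ⟨?_, ?_⟩)
        · show fmap a.2.val s = 0
          rw [h.1, fmap_zero]
        · show fmap b.2.val s = 0
          rw [h.2, fmap_zero])

lemma fmapGS_mk {ι : Type} (s : ℝ) (hs : s ∈ Set.Icc (0:ℝ) 1) (α : ι) (u : GS1set) :
    fmapGS s hs (⟦⟨α, u⟩⟧ : GS ι) = ⟦⟨α, ⟨fmap u.val s, fmap_mem u.2 hs⟩⟩⟧ := rfl

lemma fmapGS_mem_compl {ι : Type} {s : ℝ} {hs : s ∈ Set.Icc (0:ℝ) 1} {p : GS ι}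
    (hp : p ∈ (coneTips ι)ᶜ) : fmapGS s hs p ∈ (coneTips ι)ᶜ := by
  obtain ⟨⟨α, u⟩, rfl⟩ := Quotient.exists_rep p
  intro hmem
  have hu : u.val ≠ coneTip := fun h => hp (mk_mem_coneTips_iff.2 h)
  have h2 := height_mem u.2
  have hlt : u.val 2 < 1 := lt_of_le_of_ne h2.2 (fun h => hu (eq_coneTip_of_height u.2 h))
  rw [fmapGS_mk] at hmem
  have htip : fmap u.val s = coneTip := mk_mem_coneTips_iff.1 hmem
  have h1 : (1 - s) * u.val 2 = 1 := by
    have := congrArg (fun v : EuclideanSpace ℝ (Fin 3) => v 2) htip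
    rwa [fmap_apply2, coneTip_apply2] at this
  nlinarith [hs.1, hs.2, h2.1, mul_nonneg hs.1 h2.1]
lemma fmap_continuousAt {x₀ : EuclideanSpace ℝ (Fin 3)} {s₀ : ℝ} (hden : (1:ℝ) - x₀ 2 ≠ 0) :
    ContinuousAt (fun q : EuclideanSpace ℝ (Fin 3) × ℝ => fmap q.1 q.2) (x₀, s₀) := by
  have hc : ContinuousAt
      (fun q : EuclideanSpace ℝ (Fin 3) × ℝ => (fun i : Fin 3 =>
        if i = 2 then (1 - q.2) * q.1 2 else lam (q.1 2) q.2 * q.1 i))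
      (x₀, s₀) := by
    rw [continuousAt_pi]
    intro i
    by_cases hi : i = 2
    · simp only [hi, if_pos]
      exact ((continuous_const.sub continuous_snd).mul
        ((EuclideanSpace.proj (2 : Fin 3)).continuous.comp continuous_fst)).continuousAt
    · simp only [if_neg hi]
      have hnum : Continuous (fun q : EuclideanSpace ℝ (Fin 3) × ℝ =>
          (1 : ℝ) - (1 - q.2) * q.1 2) :=
        continuous_const.sub ((continuous_const.sub continuous_snd).mul
          ((EuclideanSpace.proj (2 : Fin 3)).continuous.comp continuous_fst))
      have hden' : Continuous (fun q : EuclideanSpace ℝ (Fin 3) × ℝ =>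
          (1 : ℝ) - q.1 2) :=
        continuous_const.sub
          ((EuclideanSpace.proj (2 : Fin 3)).continuous.comp continuous_fst)
      exact ((hnum.continuousAt.div hden'.continuousAt hden).mul
        ((EuclideanSpace.proj i).continuous.comp continuous_fst).continuousAt)
  exact ((EuclideanSpace.equiv (Fin 3) ℝ).symm.continuous.continuousAt).comp hc

lemma fmap_epsdelta {x₀ : EuclideanSpace ℝ (Fin 3)} {s₀ : ℝ} (hden : (1:ℝ) - x₀ 2 ≠ 0)
    {ε : ℝ} (hε : 0 < ε) :
    ∃ δ > 0, ∀ x : EuclideanSpace ℝ (Fin 3), ∀ s : ℝ,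
      dist x x₀ < δ → dist s s₀ < δ → dist (fmap x s) (fmap x₀ s₀) < ε := by
  obtain ⟨δ, hδ, hball⟩ := Metric.continuousAt_iff.1 (fmap_continuousAt hden) ε hε
  refine ⟨δ, hδ, fun x s h1 h2 => ?_⟩
  have hp : dist ((x, s) : EuclideanSpace ℝ (Fin 3) × ℝ) (x₀, s₀) < δ := by
    rw [Prod.dist_eq]
    exact max_lt h1 h2
  have h3 := hball hp
  exact h3
/-- **Lemma.** For every `κ ≥ 1`, the `κ`-fold Griffiths space with all cone tips removed,
`𝔾𝕊_κ'`, strongly deformation retracts onto `𝔼_κ`. -/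
theorem GS_minus_tips_deformation_retract (ι : Type) (a : ι) :
    ∃ H : (↥((coneTips ι)ᶜ) × ↥(Set.Icc (0:ℝ) 1)) → ↥((coneTips ι)ᶜ),
      Continuous H ∧
      (∀ x, H (x, ⟨0, by norm_num⟩) = x) ∧
      (∀ x, (H (x, ⟨1, by norm_num⟩)).val ∈ earringWedge ι) ∧
      (∀ x s, x.val ∈ earringWedge ι → H (x, s) = x) := by
  classical
  refine ⟨fun p => ⟨fmapGS p.2.val p.2.2 p.1.val, fmapGS_mem_compl p.1.2⟩, ?_, ?_, ?_, ?_⟩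
  · -- Continuity
    rw [Metric.continuous_iff]
    rintro ⟨⟨x₀, hx₀⟩, ⟨s₀, hs₀⟩⟩ ε hε
    obtain ⟨⟨α, u₀⟩, hrep⟩ := Quotient.exists_rep x₀
    by_cases h0 : u₀.val = 0
    · -- around the wedge point
      refine ⟨min (ε / 2) (1 / 2), lt_min (by linarith) (by norm_num), ?_⟩
      rintro ⟨⟨x, hx⟩, ⟨s, hs⟩⟩ hd
      obtain ⟨⟨β, v⟩, hrepv⟩ := Quotient.exists_rep x
      have hd1 : dist x x₀ < min (ε / 2) (1 / 2) := by
        have h := hd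
        rw [Prod.dist_eq] at h
        exact lt_of_le_of_lt (le_max_left _ _) h
      have hvd : dist x x₀ = ‖v.val‖ := by
        rw [← hrep, ← hrepv]
        by_cases hβ : β = α
        · subst hβ
          rw [dist_mk_same, h0, dist_zero_right]
        · rw [dist_mk_ne hβ, h0, dist_self, dist_zero_right, add_zero]
      have hvn : ‖v.val‖ < min (ε / 2) (1 / 2) := hvd ▸ hd1
      have hfb : fmap u₀.val s₀ = 0 := by rw [h0, fmap_zero]
      have hfv : ‖fmap v.val s‖ ≤ 2 * ‖v.val‖ :=
        norm_fmap_le v.2 hs (le_of_lt (lt_of_lt_of_le hvn (min_le_right _ _)))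
      have hgoal : dist (α := GS ι) (fmapGS s hs x) (fmapGS s₀ hs₀ x₀) < ε := by
        rw [← hrep, ← hrepv, fmapGS_mk, fmapGS_mk]
        have : dist (α := GS ι) ⟦⟨β, ⟨fmap v.val s, fmap_mem v.2 hs⟩⟩⟧
            ⟦⟨α, ⟨fmap u₀.val s₀, fmap_mem u₀.2 hs₀⟩⟩⟧ = ‖fmap v.val s‖ := by
          by_cases hβ : β = α
          · subst hβ
            rw [dist_mk_same]
            show dist (fmap v.val s) (fmap u₀.val s₀) = _
            rw [hfb, dist_zero_right]
          · rw [dist_mk_ne hβ]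
            show dist (fmap v.val s) 0 + dist 0 (fmap u₀.val s₀) = _
            rw [hfb, dist_self, dist_zero_right, add_zero]
        rw [this]
        have : ‖v.val‖ < ε / 2 := lt_of_lt_of_le hvn (min_le_left _ _)
        linarith
      exact hgoal
    · -- away from the wedge point: everything happens in one copy
      have hu2ne : u₀.val 2 ≠ 1 := fun h =>
        hx₀ (hrep ▸ mk_mem_coneTips_iff.2 (eq_coneTip_of_height u₀.2 h))
      have hden : (1 : ℝ) - u₀.val 2 ≠ 0 := sub_ne_zero.2 (Ne.symm hu2ne)
      obtain ⟨δg, hδg, hball⟩ := fmap_epsdelta hden hε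
      have hu0 : 0 < ‖u₀.val‖ := norm_pos_iff.2 h0
      refine ⟨min δg ‖u₀.val‖, lt_min hδg hu0, ?_⟩
      rintro ⟨⟨x, hx⟩, ⟨s, hs⟩⟩ hd
      obtain ⟨⟨β, v⟩, hrepv⟩ := Quotient.exists_rep x
      have hd1 : dist x x₀ < min δg ‖u₀.val‖ := by
        have h := hd
        rw [Prod.dist_eq] at h
        exact lt_of_le_of_lt (le_max_left _ _) h
      have hd2 : dist s s₀ < min δg ‖u₀.val‖ := by
        have h := hd
        rw [Prod.dist_eq] at h
        exact lt_of_le_of_lt (le_max_right _ _) h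
      have hβ : β = α := by
        by_contra hβ
        rw [← hrep, ← hrepv, dist_mk_ne hβ, dist_zero_right, dist_zero_left] at hd1
        have h1 := norm_nonneg v.val
        have h2 := min_le_right δg ‖u₀.val‖
        linarith
      subst hβ
      have hdv : dist v.val u₀.val < δg := by
        rw [← hrep, ← hrepv, dist_mk_same] at hd1
        exact lt_of_lt_of_le hd1 (min_le_left _ _)
      have hds : dist s s₀ < δg := lt_of_lt_of_le hd2 (min_le_left _ _)
      have hkey : dist (fmap v.val s) (fmap u₀.val s₀) < ε := hball v.val s hdv hds
      have hgoal : dist (α := GS ι) (fmapGS s hs x) (fmapGS s₀ hs₀ x₀) < ε := by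
        rw [← hrep, ← hrepv, fmapGS_mk, fmapGS_mk, dist_mk_same]
        exact hkey
      exact hgoal
  · -- H(x, 0) = x
    rintro ⟨x, hx⟩
    apply Subtype.ext
    obtain ⟨⟨α, u⟩, rfl⟩ := Quotient.exists_rep x
    have hu2ne : u.val 2 ≠ 1 := fun h =>
      hx (mk_mem_coneTips_iff.2 (eq_coneTip_of_height u.2 h))
    show fmapGS 0 (by norm_num) (⟦⟨α, u⟩⟧ : GS ι) = ⟦⟨α, u⟩⟧
    rw [fmapGS_mk]
    congr 1
    exact congrArg _ (Subtype.ext (fmap_s_zero hu2ne))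
  · -- H(x, 1) lands in the earring wedge
    rintro ⟨x, hx⟩
    obtain ⟨⟨α, u⟩, rfl⟩ := Quotient.exists_rep x
    show fmapGS 1 (by norm_num) (⟦⟨α, u⟩⟧ : GS ι) ∈ earringWedge ι
    rw [fmapGS_mk]
    apply mk_mem_earringWedge_iff.2
    show fmap u.val 1 2 = 0
    rw [fmap_apply2]
    ring
  · -- H fixes the earring wedge
    rintro ⟨x, hx⟩ ⟨s, hs⟩ hmem
    apply Subtype.ext
    obtain ⟨⟨α, u⟩, rfl⟩ := Quotient.exists_rep x
    have hu2 : u.val 2 = 0 := mk_mem_earringWedge_iff.1 hmem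
    show fmapGS s hs (⟦⟨α, u⟩⟧ : GS ι) = ⟦⟨α, u⟩⟧
    rw [fmapGS_mk]
    congr 1
    exact congrArg _ (Subtype.ext (fmap_of_height_zero hu2 s))

end Griffiths
end
end

section
/- Let Θ be a totally ordered set, let Λ_θ be a totally ordered set for each θ ∈ Θ, and let Λ = ∏_{θ∈Θ} Λ_θ be their concatenation (lexicographic sum). Suppose Λ_{θ,0} ⊆ Λ_θ is given for each θ ∈ Θ, that Close({θ ∈ Θ : Λ_{θ,0} ≠ ∅}, Θ), and that Close(Λ_{θ,0}, Λ_θ) for every θ ∈ Θ. Then Close(⋃_{θ∈Θ} Λ_{θ,0}, Λ). -/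
/-- A subset `A` of a totally ordered set `X` is *close* in `X` if every infinite interval
(order-convex subset) of `X` meets `A`. -/
def Close {X : Type*} [LinearOrder X] (A : Set X) : Prop :=
  ∀ S : Set X, S.OrdConnected → S.Infinite → (S ∩ A).Nonempty

private lemma lex_le_same {Θ : Type*} [LinearOrder Θ] {Λ : Θ → Type*}
    [∀ θ, LinearOrder (Λ θ)] {θ : Θ} {x y : Λ θ} (h : x ≤ y) :
    (toLex ⟨θ, x⟩ : Lex (Σ θ, Λ θ)) ≤ toLex ⟨θ, y⟩ :=
  Sigma.Lex.le_def.2 (Or.inr ⟨rfl, h⟩)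

private lemma lex_lt_of_fst_lt {Θ : Type*} [LinearOrder Θ] {Λ : Θ → Type*}
    [∀ θ, LinearOrder (Λ θ)] {θ θ' : Θ} (h : θ < θ') (x : Λ θ) (y : Λ θ') :
    (toLex ⟨θ, x⟩ : Lex (Σ θ, Λ θ)) < toLex ⟨θ', y⟩ :=
  Sigma.Lex.lt_def.2 (Or.inl h)

/-- **Lemma (closeness in a lexicographic sum).** Let `Θ` be a totally ordered index set,
`Λ θ` totally ordered sets, and `Λ = ∏_{θ∈Θ} Λ_θ` their concatenation (the lexicographic
sum, `Lex (Σ θ, Λ θ)`).  If the set of `θ` with `A θ ≠ ∅` is close in `Θ` and each `A θ` is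
close in `Λ θ`, then `⋃_θ A θ` is close in `Λ`. -/
theorem close_lex_sum
    (Θ : Type*) [LinearOrder Θ] (Λ : Θ → Type*) [∀ θ, LinearOrder (Λ θ)]
    (A : ∀ θ, Set (Λ θ))
    (hΘ : Close {θ : Θ | (A θ).Nonempty})
    (hA : ∀ θ, Close (A θ)) :
    Close {p : Lex (Σ θ, Λ θ) | (ofLex p).2 ∈ A (ofLex p).1} := by
  intro S hSoc hSinf
  classical
  -- fibers
  set F : ∀ θ, Set (Λ θ) := fun θ => {x | toLex ⟨θ, x⟩ ∈ S} with hF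
  by_cases hfin : ∃ θ, (F θ).Infinite
  · -- some fiber infinite: use hA there
    obtain ⟨θ, hθ⟩ := hfin
    have hoc : (F θ).OrdConnected := by
      constructor
      intro x hx y hy z hz
      exact hSoc.out hx hy ⟨lex_le_same hz.1, lex_le_same hz.2⟩
    obtain ⟨a, haF, haA⟩ := hA θ (F θ) hoc hθ
    exact ⟨toLex ⟨θ, a⟩, haF, haA⟩
  · push_neg at hfin
    -- all fibers finite, so the set of occupied indices is infinite
    set T : Set Θ := {θ | (F θ).Nonempty} with hT
    have hTinf : T.Infinite := by
      intro hTfin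
      apply hSinf
      have : S ⊆ ⋃ θ ∈ T, (fun x => (toLex ⟨θ, x⟩ : Lex (Σ θ, Λ θ))) '' (F θ) := by
        rintro ⟨θ, x⟩ hp
        exact Set.mem_biUnion (show θ ∈ T from ⟨x, hp⟩) ⟨x, hp, rfl⟩
      exact Set.Finite.subset (hTfin.biUnion fun θ _ => (((hfin θ).image _))) this
    -- convex hull of T, minus its possible max/min
    set Th : Set Θ := {θ | (∃ a ∈ T, a ≤ θ) ∧ ∃ b ∈ T, θ ≤ b} with hTh
    have hTsub : T ⊆ Th := fun θ hθ => ⟨⟨θ, hθ, le_rfl⟩, ⟨θ, hθ, le_rfl⟩⟩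
    set Mx : Set Θ := {θ ∈ T | ∀ t ∈ T, t ≤ θ} with hMx
    set Mn : Set Θ := {θ ∈ T | ∀ t ∈ T, θ ≤ t} with hMn
    have hMxfin : Mx.Finite := Set.Subsingleton.finite fun a ha b hb =>
      le_antisymm (hb.2 a ha.1) (ha.2 b hb.1)
    have hMnfin : Mn.Finite := Set.Subsingleton.finite fun a ha b hb =>
      le_antisymm (ha.2 b hb.1) (hb.2 a ha.1)
    set U : Set Θ := Th \ (Mx ∪ Mn) with hU
    have hUinf : U.Infinite := (hTinf.mono hTsub).diff (hMxfin.union hMnfin)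
    have hUoc : U.OrdConnected := by
      constructor
      rintro a ⟨⟨⟨a1, ha1, ha1'⟩, _⟩, haM⟩ c ⟨⟨_, ⟨c2, hc2, hc2'⟩⟩, hcM⟩ b hb
      refine ⟨⟨⟨a1, ha1, ha1'.trans hb.1⟩, ⟨c2, hc2, hb.2.trans hc2'⟩⟩, ?_⟩
      rintro (hbMx | hbMn)
      · have hbc : b = c := le_antisymm hb.2 (hc2'.trans (hbMx.2 c2 hc2))
        exact hcM (Or.inl (hbc ▸ hbMx))
      · have hab : b = a := le_antisymm ((hbMn.2 a1 ha1).trans ha1') hb.1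
        exact haM (Or.inr (hab ▸ hbMn))
    obtain ⟨θ0, hθ0U, hθ0A⟩ := hΘ U hUoc hUinf
    obtain ⟨⟨⟨a1, ha1, ha1'⟩, ⟨b2, hb2, hb2'⟩⟩, hθ0M⟩ := hθ0U
    -- find strict bounds in T
    have h1 : ∃ t ∈ T, t < θ0 := by
      by_contra h
      push_neg at h
      have : θ0 = a1 := le_antisymm (h a1 ha1) ha1'
      exact hθ0M (Or.inr ⟨this ▸ ha1, fun t ht => this ▸ h t ht⟩)
    have h2 : ∃ t ∈ T, θ0 < t := by
      by_contra h
      push_neg at h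
      have : θ0 = b2 := le_antisymm hb2' (h b2 hb2)
      exact hθ0M (Or.inl ⟨this ▸ hb2, fun t ht => this ▸ h t ht⟩)
    obtain ⟨θ1, hθ1, hlt1⟩ := h1
    obtain ⟨θ2, hθ2, hlt2⟩ := h2
    obtain ⟨x1, hx1⟩ := hθ1
    obtain ⟨x2, hx2⟩ := hθ2
    obtain ⟨a, ha⟩ := hθ0A
    refine ⟨toLex ⟨θ0, a⟩, hSoc.out hx1 hx2
      ⟨(lex_lt_of_fst_lt hlt1 x1 a).le, (lex_lt_of_fst_lt hlt2 a x2).le⟩, ha⟩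
end
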